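/- arXiv:1608.03768 — 2 statements merged into one kernel-verified Lean document; each statement's English description precedes it below -/
import Mathlib

section
/- Let n ≥ 3 and 1 ≤ j ≤ n - 2 be integers, let λ ∈ ℝ with -1 < λ < j(n+1)/(2n-j), and define s(t) = 1 + (λ/(n-1))·(n t² - 1). Then for every t ∈ (-1,1): s(t)·(1-t²)^{(n-1)/2} > (n-1-j) · ((1-t²)^{(n-1)/2}/(n²-1)) · (λ(n t² + 1) + n + 1). -/
open Real

theorem firey_condition_iii (n j : ℕ) (hn : 3 ≤ n) (hj1 : 1 ≤ j) (hj2 : j ≤ n - 2)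
    (l : ℝ) (hl1 : -1 < l) (hl2 : l < (j : ℝ) * ((n : ℝ) + 1) / (2 * (n : ℝ) - j))
    (t : ℝ) (ht : t ∈ Set.Ioo (-1 : ℝ) 1) :
    (1 + (l / ((n : ℝ) - 1)) * ((n : ℝ) * t ^ 2 - 1)) *
        (1 - t ^ 2) ^ (((n : ℝ) - 1) / 2) >
      ((n : ℝ) - 1 - j) * ((1 - t ^ 2) ^ (((n : ℝ) - 1) / 2) / ((n : ℝ) ^ 2 - 1)) *
        (l * ((n : ℝ) * t ^ 2 + 1) + (n : ℝ) + 1) := by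
  obtain ⟨ht1, ht2⟩ := ht
  have hn3 : (3:ℝ) ≤ (n:ℝ) := by exact_mod_cast hn
  have hjn : (j:ℝ) + 2 ≤ (n:ℝ) := by
    have : j + 2 ≤ n := by omega
    exact_mod_cast this
  have hj1' : (1:ℝ) ≤ (j:ℝ) := by exact_mod_cast hj1
  have h2nj : (0:ℝ) < 2 * (n:ℝ) - j := by linarith
  have hl2' : l * (2 * (n:ℝ) - j) < (j:ℝ) * ((n:ℝ) + 1) := by
    rwa [lt_div_iff₀ h2nj] at hl2
  have ht2' : t ^ 2 < 1 := by nlinarith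
  have htnn : 0 ≤ t ^ 2 := sq_nonneg t
  have hn1 : (0:ℝ) < (n:ℝ) - 1 := by linarith
  have hn2 : (0:ℝ) < (n:ℝ) ^ 2 - 1 := by nlinarith
  have hA : (0:ℝ) < (1 - t ^ 2) ^ (((n : ℝ) - 1) / 2) :=
    Real.rpow_pos_of_pos (by linarith) _
  set A := (1 - t ^ 2) ^ (((n : ℝ) - 1) / 2) with hAdef
  clear_value A
  have hkey : ((n:ℝ) ^ 2 - 1) * (1 + (l / ((n : ℝ) - 1)) * ((n : ℝ) * t ^ 2 - 1)) >
      ((n : ℝ) - 1 - j) * (l * ((n : ℝ) * t ^ 2 + 1) + (n : ℝ) + 1) := by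
    have heq : ((n:ℝ) ^ 2 - 1) * (1 + (l / ((n : ℝ) - 1)) * ((n : ℝ) * t ^ 2 - 1)) =
        (n:ℝ) ^ 2 - 1 + ((n:ℝ) + 1) * l * ((n:ℝ) * t ^ 2 - 1) := by
      field_simp
      ring
    rw [heq]
    rcases lt_or_ge ((n:ℝ) * t ^ 2 * ((j:ℝ) + 2) - (2 * (n:ℝ) - j)) 0 with hc | hc
    · -- c ≤ 0 : use l > -1? no, for c ≤ 0 use upper bound on l
      nlinarith [mul_pos (sub_pos.2 hl2') (neg_pos.2 hc),
        mul_nonneg (mul_nonneg (mul_nonneg (by linarith : (0:ℝ) ≤ (j:ℝ)) (by linarith : (0:ℝ) ≤ (n:ℝ)+1)) (by linarith : (0:ℝ) ≤ (n:ℝ))) htnn]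
    · -- c > 0 : use l > -1
      nlinarith [mul_nonneg (by linarith : (0:ℝ) ≤ l + 1) hc,
        mul_pos (mul_pos (by linarith : (0:ℝ) < 1 - t ^ 2) (by linarith : (0:ℝ) < (n:ℝ))) (by linarith : (0:ℝ) < (j:ℝ) + 2)]
  have hB : (0:ℝ) < A / ((n:ℝ) ^ 2 - 1) := div_pos hA hn2
  have hAB : A = A / ((n:ℝ) ^ 2 - 1) * ((n:ℝ) ^ 2 - 1) := by
    field_simp
  calc ((n : ℝ) - 1 - j) * (A / ((n:ℝ) ^ 2 - 1)) *
        (l * ((n : ℝ) * t ^ 2 + 1) + (n : ℝ) + 1)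
      < ((n:ℝ) ^ 2 - 1) * (1 + (l / ((n : ℝ) - 1)) * ((n : ℝ) * t ^ 2 - 1)) *
        (A / ((n:ℝ) ^ 2 - 1)) := by
        nlinarith [mul_lt_mul_of_pos_right hkey hB]
    _ = (1 + (l / ((n : ℝ) - 1)) * ((n : ℝ) * t ^ 2 - 1)) *
        (A / ((n:ℝ) ^ 2 - 1) * ((n:ℝ) ^ 2 - 1)) := by ring
    _ = (1 + (l / ((n : ℝ) - 1)) * ((n : ℝ) * t ^ 2 - 1)) * A := by
        rw [div_mul_cancel₀ A hn2.ne']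
end

section
/- Let K be a convex body in ℝⁿ, F a j-dimensional subspace of ℝⁿ with orthonormal basis u₁,…,u_j, and A a symmetric positive definite linear map of ℝⁿ such that the vectors Au₁,…,Au_j are pairwise orthogonal. Then vol_j(A K | F) = (∏_{i=1}^j ‖A u_i‖) · vol_j(K | A F), where K|F denotes the orthogonal projection of K onto F and AF is the image subspace. -/
open RealInnerProductSpace MeasureTheory

noncomputable section VolProjAux

/-- The linear map sending coefficients to a linear combination of a family `u`. -/
def combMap {n j : ℕ} (u : Fin j → EuclideanSpace ℝ (Fin n)) :
    EuclideanSpace ℝ (Fin j) →ₗ[ℝ] EuclideanSpace ℝ (Fin n) where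
  toFun c := ∑ i, c i • u i
  map_add' a b := by
    simp [PiLp.add_apply, add_smul, Finset.sum_add_distrib]
  map_smul' r a := by
    simp [PiLp.smul_apply, smul_smul, Finset.smul_sum]

lemma combMap_inner {n j : ℕ} {u : Fin j → EuclideanSpace ℝ (Fin n)}
    (hu : Orthonormal ℝ u) (c d : EuclideanSpace ℝ (Fin j)) :
    ⟪combMap u c, combMap u d⟫ = ⟪c, d⟫ := by
  show ⟪∑ i, c i • u i, ∑ i, d i • u i⟫ = _
  rw [hu.inner_sum]
  simp [PiLp.inner_apply, RCLike.inner_apply]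
  exact Finset.sum_congr rfl fun i _ => mul_comm _ _

/-- The linear isometry from orthonormal families. -/
def combIsom {n j : ℕ} {u : Fin j → EuclideanSpace ℝ (Fin n)} (hu : Orthonormal ℝ u) :
    EuclideanSpace ℝ (Fin j) →ₗᵢ[ℝ] EuclideanSpace ℝ (Fin n) :=
  (combMap u).isometryOfInner (combMap_inner hu)

lemma combIsom_apply {n j : ℕ} {u : Fin j → EuclideanSpace ℝ (Fin n)} (hu : Orthonormal ℝ u)
    (c : EuclideanSpace ℝ (Fin j)) : combIsom hu c = ∑ i, c i • u i := rfl

/-- The diagonal linear map on `EuclideanSpace ℝ (Fin j)`. -/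
def diagMap {j : ℕ} (d : Fin j → ℝ) :
    EuclideanSpace ℝ (Fin j) →ₗ[ℝ] EuclideanSpace ℝ (Fin j) where
  toFun c := (WithLp.equiv 2 (Fin j → ℝ)).symm fun i => d i * c i
  map_add' a b := by
    ext i
    simp [PiLp.add_apply, mul_add]
  map_smul' r a := by
    ext i
    simp [PiLp.smul_apply, smul_eq_mul]
    ring

lemma diagMap_apply {j : ℕ} (d : Fin j → ℝ) (c : EuclideanSpace ℝ (Fin j)) (i : Fin j) :
    diagMap d c i = d i * c i := rfl

lemma det_diagMap {j : ℕ} (d : Fin j → ℝ) :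
    LinearMap.det (diagMap d) = ∏ i, d i := by
  classical
  let b := PiLp.basisFun 2 ℝ (Fin j)
  rw [← LinearMap.det_toMatrix b]
  have : LinearMap.toMatrix b b (diagMap d) = Matrix.diagonal d := by
    ext i k
    rw [LinearMap.toMatrix_apply]
    simp only [b, PiLp.basisFun_repr, PiLp.basisFun_apply, diagMap_apply,
      WithLp.equiv_symm_apply, PiLp.toLp_apply, Matrix.diagonal_apply, Pi.single_apply]
    by_cases h : i = k <;> simp [h]
  rw [this, Matrix.det_diagonal]

end VolProjAux

theorem vol_projection_linear_image (n j : ℕ) (hj1 : 1 ≤ j) (hj2 : j ≤ n)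
    (K : Set (EuclideanSpace ℝ (Fin n))) (hKconv : Convex ℝ K) (hKcomp : IsCompact K)
    (u : Fin j → EuclideanSpace ℝ (Fin n)) (hu : Orthonormal ℝ u)
    (A : EuclideanSpace ℝ (Fin n) ≃ₗ[ℝ] EuclideanSpace ℝ (Fin n))
    (hAsymm : ∀ x y : EuclideanSpace ℝ (Fin n), ⟪A x, y⟫ = ⟪x, A y⟫)
    (hApos : ∀ x : EuclideanSpace ℝ (Fin n), x ≠ 0 → 0 < ⟪A x, x⟫)
    (hAu : ∀ i i' : Fin j, i ≠ i' → ⟪A (u i), A (u i')⟫ = 0) :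
    μH[(j : ℝ)] ((fun x : EuclideanSpace ℝ (Fin n) =>
        ∑ i : Fin j, ⟪A x, u i⟫ • u i) '' K) =
      ENNReal.ofReal (∏ i : Fin j, ‖A (u i)‖) *
        μH[(j : ℝ)] ((fun x : EuclideanSpace ℝ (Fin n) =>
          (Submodule.orthogonalProjectionOnto
            ((Submodule.span ℝ (Set.range u)).map
              (A : EuclideanSpace ℝ (Fin n) →ₗ[ℝ] EuclideanSpace ℝ (Fin n))) x :
            EuclideanSpace ℝ (Fin n))) '' K) := by
  classical
  set F' := (Submodule.span ℝ (Set.range u)).map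
      (A : EuclideanSpace ℝ (Fin n) →ₗ[ℝ] EuclideanSpace ℝ (Fin n)) with hF'def
  set w : Fin j → EuclideanSpace ℝ (Fin n) := fun i => A (u i) with hw
  have hwne : ∀ i, w i ≠ 0 := fun i => by
    simp only [hw]
    intro h
    exact hu.ne_zero i (A.injective (by simpa using h))
  set v : Fin j → EuclideanSpace ℝ (Fin n) := fun i => ‖w i‖⁻¹ • w i with hv
  have hnw : ∀ i, ‖w i‖ ≠ 0 := fun i => norm_ne_zero_iff.2 (hwne i)
  have hvon : Orthonormal ℝ v := by
    rw [orthonormal_iff_ite]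
    intro i i'
    simp only [hv, real_inner_smul_left, real_inner_smul_right]
    by_cases h : i = i'
    · subst h
      rw [real_inner_self_eq_norm_mul_norm]
      field_simp
      exact div_self (hnw i)
    · simp only [hw]
      rw [hAu i i' h]
      simp [h]
  -- coordinate maps
  set φ : EuclideanSpace ℝ (Fin n) → EuclideanSpace ℝ (Fin j) :=
    fun x => (WithLp.equiv 2 (Fin j → ℝ)).symm fun i => ⟪x, w i⟫ with hφ
  set ψ : EuclideanSpace ℝ (Fin n) → EuclideanSpace ℝ (Fin j) :=
    fun x => (WithLp.equiv 2 (Fin j → ℝ)).symm fun i => ⟪x, v i⟫ with hψ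
  have hφapp : ∀ x i, φ x i = ⟪x, w i⟫ := fun x i => rfl
  have hψapp : ∀ x i, ψ x i = ⟪x, v i⟫ := fun x i => rfl
  -- image on the left
  have h1 : (fun x : EuclideanSpace ℝ (Fin n) => ∑ i : Fin j, ⟪A x, u i⟫ • u i) '' K
      = combIsom hu '' (φ '' K) := by
    rw [Set.image_image]
    apply congrFun (congrArg _ _)
    funext x
    rw [combIsom_apply]
    exact Finset.sum_congr rfl fun i _ => by rw [hφapp, ← hAsymm]
  -- span facts
  have hspan : F' = Submodule.span ℝ (Set.range v) := by
    have h2 : F' = Submodule.span ℝ (Set.range w) := by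
      rw [hF'def, Submodule.map_span, ← Set.range_comp]
      rfl
    rw [h2]
    apply le_antisymm <;> rw [Submodule.span_le] <;> rintro _ ⟨i, rfl⟩
    · have hwi : w i = ‖w i‖ • v i := by
        rw [hv]; simp [smul_smul, mul_inv_cancel₀ (hnw i)]
      rw [hwi]
      exact Submodule.smul_mem _ _ (Submodule.subset_span ⟨i, rfl⟩)
    · exact Submodule.smul_mem _ _ (Submodule.subset_span ⟨i, rfl⟩)
  -- orthogonal projection formula
  have hproj : ∀ x : EuclideanSpace ℝ (Fin n), ((Submodule.orthogonalProjectionOnto F' x : EuclideanSpace ℝ (Fin n))) = combIsom hvon (ψ x) := by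
    intro x
    have hy : (∑ i, ⟪x, v i⟫ • v i) ∈ F' := by
      rw [hspan]
      exact Submodule.sum_mem _ fun i _ =>
        Submodule.smul_mem _ _ (Submodule.subset_span ⟨i, rfl⟩)
    have horto : ∀ z ∈ F', ⟪x - ∑ i, ⟪x, v i⟫ • v i, z⟫ = 0 := by
      intro z hz
      rw [hspan] at hz
      induction hz using Submodule.span_induction with
      | mem z hzm =>
        obtain ⟨k, rfl⟩ := hzm
        rw [inner_sub_left, hvon.inner_left_fintype]
        simp [real_inner_comm]
      | zero => simp
      | add z₁ z₂ _ _ h₁ h₂ => rw [inner_add_right, h₁, h₂, add_zero]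
      | smul r z _ h => rw [real_inner_smul_right, h, mul_zero]
    have h2 : ((Submodule.orthogonalProjectionOnto F' x : EuclideanSpace ℝ (Fin n))) = ∑ i, ⟪x, v i⟫ • v i :=
      Submodule.eq_starProjection_of_mem_of_inner_eq_zero hy horto
    rw [h2, combIsom_apply]
    exact Finset.sum_congr rfl fun i _ => by rw [hψapp]
  have h3 : (fun x : EuclideanSpace ℝ (Fin n) => ((Submodule.orthogonalProjectionOnto F' x : EuclideanSpace ℝ (Fin n)))) '' K
      = combIsom hvon '' (ψ '' K) := by
    rw [Set.image_image]
    apply congrFun (congrArg _ _)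
    funext x
    exact hproj x
  -- relate coordinate maps by diagonal map
  have hdiag : ∀ x : EuclideanSpace ℝ (Fin n), φ x = diagMap (fun i => ‖w i‖) (ψ x) := by
    intro x
    ext i
    rw [hφapp, diagMap_apply, hψapp, hv]
    simp only [real_inner_smul_right]
    rw [← mul_assoc, mul_inv_cancel₀ (hnw i), one_mul]
  have h4 : φ '' K = ⇑(diagMap (fun i => ‖w i‖)) '' (ψ '' K) := by
    rw [Set.image_image]
    apply congrFun (congrArg _ _)
    funext x
    exact hdiag x
  -- measure computations
  have hd0 : (0:ℝ) ≤ (j:ℝ) := Nat.cast_nonneg j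
  have e1 : μH[(j : ℝ)] (combIsom hu '' (φ '' K)) = μH[(j : ℝ)] (φ '' K) :=
    (combIsom hu).isometry.hausdorffMeasure_image (Or.inl hd0) _
  have e2 : μH[(j : ℝ)] (combIsom hvon '' (ψ '' K)) = μH[(j : ℝ)] (ψ '' K) :=
    (combIsom hvon).isometry.hausdorffMeasure_image (Or.inl hd0) _
  have hfin : (j : ℝ) = ((Module.finrank ℝ (EuclideanSpace ℝ (Fin j)) : ℕ) : ℝ) := by
    simp
  have e3 : μH[(j : ℝ)] (φ '' K)
      = ENNReal.ofReal (∏ i, ‖w i‖) * μH[(j : ℝ)] (ψ '' K) := by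
    rw [h4, hfin, Measure.addHaar_image_linearMap, det_diagMap,
      abs_of_nonneg (Finset.prod_nonneg fun i _ => norm_nonneg _)]
  rw [h1, e1, e3, h3, e2]
end
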